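/- Integrated Gradients satisfies the efficiency (completeness) axiom: if f : (Fin n → ℝ) → ℝ is continuously differentiable, then for all points a, b ∈ ℝⁿ, the attributions sum to the score difference: ∑_{i ∈ Fin n} IG_i(f,a,b) = f(b) − f(a). -/

import Mathlib

noncomputable def IG {n : ℕ} (f : (Fin n → ℝ) → ℝ) (a b : Fin n → ℝ) (i : Fin n) : ℝ :=
  (b i - a i) * ∫ t in (0:ℝ)..1, fderiv ℝ f (fun j => a j + t * (b j - a j)) (Pi.single i 1)

theorem IG_efficiency (n : ℕ) (hn : 1 ≤ n) (f : (Fin n → ℝ) → ℝ)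
    (hf : ContDiff ℝ 1 f) (a b : Fin n → ℝ) :
    ∑ i, IG f a b i = f b - f a := by
  set γ : ℝ → (Fin n → ℝ) := fun t => fun j => a j + t * (b j - a j) with hγdef
  set v : Fin n → ℝ := fun j => b j - a j with hvdef
  have hγ : ∀ t : ℝ, HasDerivAt γ v t := by
    intro t
    have : HasDerivAt (fun s : ℝ => a + s • v) v t := by
      simpa using ((hasDerivAt_id t).smul_const v).const_add a
    convert this using 1
    funext s j; simp [hγdef, hvdef, smul_eq_mul]
  have hcγ : Continuous γ := by
    apply continuous_pi; intro j
    exact continuous_const.add (continuous_id.mul continuous_const)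
  have hder : ∀ t : ℝ, HasDerivAt (fun s => f (γ s)) (fderiv ℝ f (γ t) v) t := by
    intro t
    exact ((hf.differentiable one_ne_zero (γ t)).hasFDerivAt).comp_hasDerivAt t (hγ t)
  have hcontD : Continuous fun t => fderiv ℝ f (γ t) := by
    exact (hf.continuous_fderiv one_ne_zero).comp hcγ
  have happly : ∀ w : Fin n → ℝ, Continuous fun t => fderiv ℝ f (γ t) w := by
    intro w
    exact (ContinuousLinearMap.apply ℝ ℝ w).continuous.comp hcontD
  have hint : ∀ i : Fin n, IntervalIntegrable
      (fun t => (b i - a i) * fderiv ℝ f (γ t) (Pi.single i 1))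
      MeasureTheory.volume 0 1 := by
    intro i
    exact (continuous_const.mul (happly _)).intervalIntegrable 0 1
  have hv : v = ∑ i, (b i - a i) • (Pi.single i 1 : Fin n → ℝ) := by
    funext j
    simp [hvdef, Finset.sum_apply, Pi.single_apply, smul_eq_mul]
  calc ∑ i, IG f a b i
      = ∑ i, ∫ t in (0:ℝ)..1, (b i - a i) * fderiv ℝ f (γ t) (Pi.single i 1) := by
        refine Finset.sum_congr rfl fun i _ => ?_
        rw [IG, ← intervalIntegral.integral_const_mul]
    _ = ∫ t in (0:ℝ)..1, ∑ i, (b i - a i) * fderiv ℝ f (γ t) (Pi.single i 1) := by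
        exact (intervalIntegral.integral_finset_sum (fun i _ => hint i)).symm
    _ = ∫ t in (0:ℝ)..1, fderiv ℝ f (γ t) v := by
        refine intervalIntegral.integral_congr fun t _ => ?_
        rw [hv, map_sum]
        exact (Finset.sum_congr rfl fun i _ => by rw [map_smul, smul_eq_mul]).symm
    _ = f (γ 1) - f (γ 0) := by
        refine intervalIntegral.integral_eq_sub_of_hasDerivAt (fun t _ => hder t) ?_
        exact (happly v).intervalIntegrable 0 1
    _ = f b - f a := by
        have h1 : γ 1 = b := by funext j; simp [hγdef]
        have h0 : γ 0 = a := by funext j; simp [hγdef]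
        rw [h1, h0]
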